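/- (Toeplitz minors as matrix integrals with Schur insertions, bialternant form.) Let f : ℝ → ℂ be a bounded 2π-periodic measurable function with Fourier coefficients d_m = (1/2π) ∫_{-π}^{π} f(φ) e^{-imφ} dφ. Let λ = (λ_1 ≥ λ_2 ≥ … ≥ λ_N ≥ 0) and μ = (μ_1 ≥ μ_2 ≥ … ≥ μ_N ≥ 0) be partitions with at most N parts. Then det( d_{(j−λ_j)−(k−μ_k)} )_{j,k=1}^{N} = (1/N!) ∫_{[-π,π]^N} det( e^{i(λ_l+N−l)φ_j} )_{j,l=1}^{N} · det( e^{-i(μ_l+N−l)φ_j} )_{j,l=1}^{N} ∏_{j=1}^{N} f(φ_j) (dφ_j/2π). -/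

import Mathlib

open MeasureTheory

-- pointwise indicator of a product over a pi set
lemma indicator_pi_prod {N : ℕ} (s : Set ℝ) (g : Fin N → ℝ → ℂ) (φ : Fin N → ℝ) :
    (Set.univ.pi fun _ : Fin N => s).indicator (fun φ => ∏ j, g j (φ j)) φ =
      ∏ j, s.indicator (g j) (φ j) := by
  by_cases h : φ ∈ Set.univ.pi fun _ : Fin N => s
  · rw [Set.indicator_of_mem h]
    refine Finset.prod_congr rfl fun j _ => ?_
    rw [Set.indicator_of_mem (h j (Set.mem_univ j))]
  · rw [Set.indicator_of_notMem h]
    rw [Set.mem_pi] at h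
    push_neg at h
    obtain ⟨j, -, hj⟩ := h
    exact (Finset.prod_eq_zero (Finset.mem_univ j) (Set.indicator_of_notMem hj _)).symm

lemma integrableOn_pi_prod {N : ℕ} {s : Set ℝ} (hs : MeasurableSet s) {g : Fin N → ℝ → ℂ}
    (hg : ∀ j, IntegrableOn (g j) s) :
    IntegrableOn (fun φ : Fin N → ℝ => ∏ j, g j (φ j)) (Set.univ.pi fun _ => s) := by
  rw [← integrable_indicator_iff (MeasurableSet.univ_pi fun _ => hs)]
  have : (Set.univ.pi fun _ : Fin N => s).indicator (fun φ : Fin N → ℝ => ∏ j, g j (φ j)) =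
      fun φ => ∏ j, s.indicator (g j) (φ j) := funext (indicator_pi_prod s g)
  rw [this]
  exact Integrable.fintype_prod fun j => (hg j).integrable_indicator hs

lemma integral_pi_prod {N : ℕ} {s : Set ℝ} (hs : MeasurableSet s) {g : Fin N → ℝ → ℂ}
    (hg : ∀ j, IntegrableOn (g j) s) :
    ∫ φ : Fin N → ℝ in Set.univ.pi fun _ => s, ∏ j, g j (φ j) = ∏ j, ∫ x in s, g j x := by
  rw [← integral_indicator (MeasurableSet.univ_pi fun _ => hs)]
  have : (Set.univ.pi fun _ : Fin N => s).indicator (fun φ : Fin N → ℝ => ∏ j, g j (φ j)) =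
      fun φ => ∏ j, s.indicator (g j) (φ j) := funext (indicator_pi_prod s g)
  rw [this]
  beta_reduce
  rw [integral_fintype_prod_volume_eq_prod (f := fun j => s.indicator (g j))]
  exact Finset.prod_congr rfl fun j _ => integral_indicator hs

open Equiv in
lemma andreief {N : ℕ} (a b : Fin N → ℝ → ℂ) {s : Set ℝ} (hs : MeasurableSet s)
    (hint : ∀ p q, IntegrableOn (fun x => a p x * b q x) s) :
    ∫ φ : Fin N → ℝ in Set.univ.pi fun _ => s,
      (Matrix.det (Matrix.of fun j l : Fin N => a l (φ j)) *
        Matrix.det (Matrix.of fun j l : Fin N => b l (φ j))) =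
      (N.factorial : ℂ) *
        Matrix.det (Matrix.of fun p q : Fin N => ∫ x in s, a p x * b q x) := by
  set M : Matrix (Fin N) (Fin N) ℂ := Matrix.of fun p q : Fin N => ∫ x in s, a p x * b q x with hM
  have hε : ∀ σ : Perm (Fin N), ((Perm.sign σ : ℤ) : ℂ) * ((Perm.sign σ : ℤ) : ℂ) = 1 := by
    intro σ
    rcases Int.units_eq_one_or (Equiv.Perm.sign σ) with h | h <;> rw [h] <;> norm_num
  -- pointwise expansion of the integrand
  have hpt : ∀ φ : Fin N → ℝ,
      (Matrix.det (Matrix.of fun j l : Fin N => a l (φ j)) *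
        Matrix.det (Matrix.of fun j l : Fin N => b l (φ j))) =
      ∑ σ : Perm (Fin N), ∑ τ : Perm (Fin N),
        (((Perm.sign σ : ℤ) : ℂ) * ((Perm.sign τ : ℤ) : ℂ)) *
          ∏ j, (a (σ⁻¹ j) (φ j) * b (τ⁻¹ j) (φ j)) := by
    intro φ
    rw [Matrix.det_apply', Matrix.det_apply', Finset.sum_mul_sum]
    refine Finset.sum_congr rfl fun σ _ => Finset.sum_congr rfl fun τ _ => ?_
    have h1 : ∏ i, (Matrix.of fun j l : Fin N => a l (φ j)) (σ i) i
        = ∏ j, a (σ⁻¹ j) (φ j) := by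
      rw [← Equiv.prod_comp σ (fun j => a (σ⁻¹ j) (φ j))]
      simp
    have h2 : ∏ i, (Matrix.of fun j l : Fin N => b l (φ j)) (τ i) i
        = ∏ j, b (τ⁻¹ j) (φ j) := by
      rw [← Equiv.prod_comp τ (fun j => b (τ⁻¹ j) (φ j))]
      simp
    rw [h1, h2, Finset.prod_mul_distrib]
    ring
  calc
    ∫ φ : Fin N → ℝ in Set.univ.pi fun _ => s,
      (Matrix.det (Matrix.of fun j l : Fin N => a l (φ j)) *
        Matrix.det (Matrix.of fun j l : Fin N => b l (φ j)))
      = ∫ φ : Fin N → ℝ in Set.univ.pi fun _ => s,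
          ∑ σ : Perm (Fin N), ∑ τ : Perm (Fin N),
            (((Perm.sign σ : ℤ) : ℂ) * ((Perm.sign τ : ℤ) : ℂ)) *
              ∏ j, (a (σ⁻¹ j) (φ j) * b (τ⁻¹ j) (φ j)) := by
        exact integral_congr_ae (Filter.Eventually.of_forall fun φ => hpt φ)
    _ = ∑ σ : Perm (Fin N), ∑ τ : Perm (Fin N),
          (((Perm.sign σ : ℤ) : ℂ) * ((Perm.sign τ : ℤ) : ℂ)) *
            ∏ j, M (σ⁻¹ j) (τ⁻¹ j) := by
        have hint' : ∀ σ τ : Perm (Fin N), IntegrableOn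
            (fun φ : Fin N → ℝ => (((Perm.sign σ : ℤ) : ℂ) * ((Perm.sign τ : ℤ) : ℂ)) *
              ∏ j, (a (σ⁻¹ j) (φ j) * b (τ⁻¹ j) (φ j))) (Set.univ.pi fun _ => s) := by
          intro σ τ
          exact (integrableOn_pi_prod hs (fun j => hint (σ⁻¹ j) (τ⁻¹ j))).const_mul _
        rw [integral_finset_sum _ (fun σ _ => integrable_finset_sum _ (fun τ _ => hint' σ τ))]
        refine Finset.sum_congr rfl fun σ _ => ?_
        rw [integral_finset_sum _ (fun τ _ => hint' σ τ)]
        refine Finset.sum_congr rfl fun τ _ => ?_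
        rw [integral_const_mul, integral_pi_prod hs (fun j => hint (σ⁻¹ j) (τ⁻¹ j))]
        rfl
    _ = ∑ σ : Perm (Fin N), ∑ τ : Perm (Fin N),
          (((Perm.sign σ : ℤ) : ℂ) * ((Perm.sign τ : ℤ) : ℂ)) * ∏ j, M (σ j) (τ j) := by
        refine Fintype.sum_equiv (Equiv.inv (Perm (Fin N))) _ _ fun σ => ?_
        refine Fintype.sum_equiv (Equiv.inv (Perm (Fin N))) _ _ fun τ => ?_
        simp [Perm.sign_inv]
    _ = ∑ σ : Perm (Fin N),
          ∑ π : Perm (Fin N), (((Perm.sign π : ℤ) : ℂ)) * ∏ p, M p (π p) := by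
        refine Finset.sum_congr rfl fun σ _ => ?_
        refine Fintype.sum_equiv (Equiv.mulRight σ⁻¹) _ _ fun π => ?_
        have hprod : ∏ j, M (σ j) (π j) = ∏ p, M p ((π * σ⁻¹) p) := by
          rw [← Equiv.prod_comp σ (fun p => M p ((π * σ⁻¹) p))]
          refine Finset.prod_congr rfl fun j _ => ?_
          simp [Perm.mul_apply]
        have hsgn : ((Perm.sign (π * σ⁻¹) : ℤ) : ℂ) =
            ((Perm.sign π : ℤ) : ℂ) * ((Perm.sign σ : ℤ) : ℂ) := by
          rw [Perm.sign_mul, Perm.sign_inv]; push_cast; ring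
        rw [Equiv.coe_mulRight, hprod, hsgn]
        ring
    _ = (N.factorial : ℂ) * Matrix.det M := by
        have hdet : ∑ π : Perm (Fin N), (((Perm.sign π : ℤ) : ℂ)) * ∏ p, M p (π p)
            = Matrix.det M := by
          rw [← Matrix.det_transpose M, Matrix.det_apply']
          rfl
        rw [Finset.sum_const, hdet]
        simp [Fintype.card_perm, mul_comm]

lemma norm_exp_I_mul_real (r x : ℝ) : ‖Complex.exp (Complex.I * (r : ℂ) * (x : ℂ))‖ = 1 := by
  have : (Complex.I * (r : ℂ) * (x : ℂ)).re = 0 := by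
    simp [Complex.mul_re, Complex.mul_im]
  rw [Complex.norm_exp, this, Real.exp_zero]

/-- Toeplitz minors as matrix integrals with Schur-polynomial (bialternant) insertions:
the minor `D_N^{λ,μ}(f) = det(d_{(j-λ_j)-(k-μ_k)})` of the Toeplitz matrix of a bounded
2π-periodic symbol `f` equals `1/N!` times the integral over `[-π,π]^N` of the product of the
two bialternants `det(e^{i(λ_l+N-1-l)φ_j})`, `det(e^{-i(μ_l+N-1-l)φ_j})` (0-based indexing)
against `∏ f(φ_j) dφ_j/2π`. -/
theorem toeplitz_minor_matrix_integral
    (f : ℝ → ℂ) (hper : Function.Periodic f (2 * Real.pi))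
    (hmeas : Measurable f) (C : ℝ) (hbdd : ∀ x, ‖f x‖ ≤ C)
    (N : ℕ) (lam mu : Fin N → ℕ) (hlam : Antitone lam) (hmu : Antitone mu) :
    Matrix.det (Matrix.of fun j k : Fin N =>
        (1 / (2 * (Real.pi : ℂ))) * ∫ φ in (-Real.pi)..Real.pi,
          f φ * Complex.exp (-Complex.I *
            ((((j : ℤ) - (lam j : ℤ)) - ((k : ℤ) - (mu k : ℤ))) : ℤ) * φ)) =
      (1 / (N.factorial : ℂ)) *
        ∫ φ : Fin N → ℝ in Set.univ.pi (fun _ => Set.Icc (-Real.pi) Real.pi),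
          (Matrix.det (Matrix.of fun j l : Fin N =>
              Complex.exp (Complex.I * ((lam l : ℂ) + N - 1 - (l : ℕ)) * φ j)) *
            Matrix.det (Matrix.of fun j l : Fin N =>
              Complex.exp (-Complex.I * ((mu l : ℂ) + N - 1 - (l : ℕ)) * φ j)) *
            ∏ j : Fin N, (f (φ j) * (1 / (2 * (Real.pi : ℂ))))) := by
  classical
  set w : ℝ → ℂ := fun x => f x * (1 / (2 * (Real.pi : ℂ))) with hw
  set a : Fin N → ℝ → ℂ := fun l x =>
    Complex.exp (Complex.I * ((lam l : ℂ) + N - 1 - (l : ℕ)) * x) with ha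
  set b : Fin N → ℝ → ℂ := fun l x =>
    Complex.exp (-Complex.I * ((mu l : ℂ) + N - 1 - (l : ℕ)) * x) * w x with hb
  have hIcc : MeasurableSet (Set.Icc (-Real.pi) Real.pi) := measurableSet_Icc
  -- real forms of the exponents
  have hcl : ∀ l : Fin N, ((lam l : ℂ) + N - 1 - (l : ℕ)) =
      (((lam l : ℝ) + N - 1 - (l : ℕ) : ℝ) : ℂ) := by intro l; push_cast; ring
  have hcm : ∀ l : Fin N, ((mu l : ℂ) + N - 1 - (l : ℕ)) =
      (((mu l : ℝ) + N - 1 - (l : ℕ) : ℝ) : ℂ) := by intro l; push_cast; ring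
  have hna : ∀ l x, ‖a l x‖ = 1 := by
    intro l x
    rw [ha]; simp only; rw [hcl l, norm_exp_I_mul_real]
  have hnb0 : ∀ l (x : ℝ), ‖Complex.exp (-Complex.I * ((mu l : ℂ) + N - 1 - (l : ℕ)) * x)‖ = 1 := by
    intro l x
    have : -Complex.I * ((mu l : ℂ) + N - 1 - (l : ℕ)) * x =
        Complex.I * ((-((mu l : ℝ) + N - 1 - (l : ℕ)) : ℝ) : ℂ) * x := by
      rw [hcm l]; push_cast; ring
    rw [this, norm_exp_I_mul_real]
  haveI : IsFiniteMeasure (volume.restrict (Set.Icc (-Real.pi) Real.pi)) := by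
    constructor
    rw [Measure.restrict_apply_univ, Real.volume_Icc]
    exact ENNReal.ofReal_lt_top
  -- integrability of the products
  have hint : ∀ p q : Fin N, IntegrableOn (fun x => a p x * b q x)
      (Set.Icc (-Real.pi) Real.pi) := by
    intro p q
    have hmeas' : Measurable fun x => a p x * b q x := by
      rw [ha, hb, hw]
      simp only
      fun_prop
    refine Integrable.mono' (g := fun _ => C * ‖(1 / (2 * (Real.pi : ℂ)))‖)
      (integrable_const _) hmeas'.aestronglyMeasurable (ae_of_all _ fun x => ?_)
    rw [hb, hw]
    simp only
    rw [norm_mul, norm_mul, norm_mul, hna p x, hnb0 q x]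
    have h1 : ‖f x‖ * ‖(1 / (2 * (Real.pi : ℂ)))‖ ≤ C * ‖(1 / (2 * (Real.pi : ℂ)))‖ :=
      mul_le_mul_of_nonneg_right (hbdd x) (norm_nonneg _)
    nlinarith [norm_nonneg (f x), norm_nonneg (1 / (2 * (Real.pi : ℂ)))]
  -- rewrite the integrand using the weighted bialternant
  have hintegrand : ∀ φ : Fin N → ℝ,
      (Matrix.det (Matrix.of fun j l : Fin N =>
          Complex.exp (Complex.I * ((lam l : ℂ) + N - 1 - (l : ℕ)) * φ j)) *
        Matrix.det (Matrix.of fun j l : Fin N =>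
          Complex.exp (-Complex.I * ((mu l : ℂ) + N - 1 - (l : ℕ)) * φ j)) *
        ∏ j : Fin N, (f (φ j) * (1 / (2 * (Real.pi : ℂ))))) =
      Matrix.det (Matrix.of fun j l : Fin N => a l (φ j)) *
        Matrix.det (Matrix.of fun j l : Fin N => b l (φ j)) := by
    intro φ
    have : (Matrix.of fun j l : Fin N => b l (φ j)) =
        Matrix.of fun j l : Fin N => w (φ j) *
          (Matrix.of fun j l : Fin N =>
            Complex.exp (-Complex.I * ((mu l : ℂ) + N - 1 - (l : ℕ)) * φ j)) j l := by
      ext j l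
      simp only [Matrix.of_apply, hb, mul_comm]
    rw [this, Matrix.det_mul_column]
    rw [ha]
    ring
  rw [integral_congr_ae (Filter.Eventually.of_forall hintegrand),
    andreief a b hIcc hint]
  have hfac : (N.factorial : ℂ) ≠ 0 := Nat.cast_ne_zero.mpr (Nat.factorial_ne_zero N)
  rw [← mul_assoc, one_div_mul_cancel hfac, one_mul]
  -- identify the matrix entries
  congr 1
  ext j k
  have hle : -Real.pi ≤ Real.pi := by linarith [Real.pi_pos]
  rw [Matrix.of_apply, Matrix.of_apply, intervalIntegral.integral_of_le hle,
    integral_Icc_eq_integral_Ioc, ← integral_const_mul]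
  refine integral_congr_ae (ae_of_all _ fun x => ?_)
  rw [ha, hb, hw]
  simp only
  rw [← mul_assoc (Complex.exp _), ← Complex.exp_add]
  have hexp : -Complex.I *
        ((((j : ℤ) - (lam j : ℤ)) - ((k : ℤ) - (mu k : ℤ)) : ℤ) : ℂ) * x =
      Complex.I * ((lam j : ℂ) + N - 1 - (j : ℕ)) * x +
        -Complex.I * ((mu k : ℂ) + N - 1 - (k : ℕ)) * x := by
    push_cast
    ring
  rw [← hexp]
  ring
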